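/- Let {v₁, v₂, v₃} be a ℤ-basis of ℤ³ such that for all 1 ≤ i ≠ j ≤ 3 one has ‖v_i + v_j‖ ≥ max{‖v_i‖, ‖v_j‖} and ‖v_i − v_j‖ ≥ max{‖v_i‖, ‖v_j‖} (equivalently, |⟨v_i, v_j⟩| ≤ (1/2)·min{‖v_i‖², ‖v_j‖²}). Then each v_i belongs to {±e₁, ±e₂, ±e₃}, where e₁, e₂, e₃ is the standard basis of ℤ³. (Norm-inequality form of the Main Theorem, as established in its proof.) -/
import Mathlib


/-- The Euclidean norm of an integer vector in `ℤ³`, regarded as a vector in `ℝ³`. -/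
noncomputable def enorm3 (v : Fin 3 → ℤ) : ℝ :=
  Real.sqrt (∑ i, ((v i : ℝ)) ^ 2)

/-- `{v₁, v₂, v₃}` is a `ℤ`-basis of `ℤ³`: the matrix with columns `v₁, v₂, v₃` has
determinant `±1`. -/
def IsZBasis (v₁ v₂ v₃ : Fin 3 → ℤ) : Prop :=
  (Matrix.of fun i j => ![v₁, v₂, v₃] j i).det = 1 ∨
    (Matrix.of fun i j => ![v₁, v₂, v₃] j i).det = -1


set_option maxHeartbeats 1000000 in
lemma keyInt (a b c p q r : ℤ) (ha : 1 ≤ a) (hab : a ≤ b) (hbc : b ≤ c)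
    (hp1 : 2*p ≤ a) (hp2 : -a ≤ 2*p)
    (hq1 : 2*q ≤ a) (hq2 : -a ≤ 2*q)
    (hr1 : 2*r ≤ b) (hr2 : -b ≤ 2*r)
    (hD : a*b*c + 2*p*q*r - a*r^2 - b*q^2 - c*p^2 = 1) :
    a = 1 ∧ b = 1 ∧ c = 1 := by
  by_cases ha1 : a = 1
  · subst ha1
    have hp0 : p = 0 := by omega
    have hq0 : q = 0 := by omega
    subst hp0; subst hq0
    have hb0 : (0:ℤ) ≤ b := by linarith
    have hbb : b*b ≤ b*c := mul_le_mul_of_nonneg_left hbc hb0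
    have hr : (0:ℤ) ≤ (b - 2*r)*(b + 2*r) := mul_nonneg (by linarith) (by linarith)
    have hbc' : b * c ≤ 1 := by nlinarith
    have hbc1 : b ≤ b*c := by
      have := mul_le_mul_of_nonneg_left (show (1:ℤ) ≤ c by linarith) hb0
      linarith
    have hb1 : b = 1 := by linarith
    subst hb1
    refine ⟨rfl, rfl, by linarith⟩
  · exfalso
    have ha2 : 2 ≤ a := by omega
    have ha0 : (0:ℤ) < a := by linarith
    have hb0 : (0:ℤ) < b := by linarith
    have hc0 : (0:ℤ) < c := by linarith
    -- step 1 : b = a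
    have hb' : b = a := by
      by_contra hba
      have hba : a + 1 ≤ b := by omega
      have hc3 : 3 ≤ c := by omega
      have hid : (a*c - q^2)*(b*c - r^2) - (c*p - q*r)^2 = c := by linear_combination c*hD
      have hqr1 : 4*(q*r) ≤ a*b := by
        linarith [mul_nonneg (by linarith : (0:ℤ) ≤ a - 2*q) (by linarith : (0:ℤ) ≤ b + 2*r),
          mul_nonneg (by linarith : (0:ℤ) ≤ a + 2*q) (by linarith : (0:ℤ) ≤ b - 2*r)]
      have hqr2 : -(a*b) ≤ 4*(q*r) := by
        linarith [mul_nonneg (by linarith : (0:ℤ) ≤ a - 2*q) (by linarith : (0:ℤ) ≤ b - 2*r),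
          mul_nonneg (by linarith : (0:ℤ) ≤ a + 2*q) (by linarith : (0:ℤ) ≤ b + 2*r)]
      have hcp1 : 4*(c*p) ≤ 2*(a*c) := by
        linarith [mul_nonneg hc0.le (by linarith : (0:ℤ) ≤ a - 2*p)]
      have hcp2 : -(2*(a*c)) ≤ 4*(c*p) := by
        linarith [mul_nonneg hc0.le (by linarith : (0:ℤ) ≤ a + 2*p)]
      have habac : a*b ≤ a*c := mul_le_mul_of_nonneg_left hbc ha0.le
      have hX1 : 4*(c*p - q*r) ≤ 3*(a*c) := by linarith
      have hX2 : -(3*(a*c)) ≤ 4*(c*p - q*r) := by linarith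
      have hXsq : 16*(c*p - q*r)^2 ≤ 9*(a*c)^2 := by
        linarith [mul_nonneg (by linarith : (0:ℤ) ≤ 3*(a*c) - 4*(c*p - q*r))
          (by linarith : (0:ℤ) ≤ 3*(a*c) + 4*(c*p - q*r))]
      have haac : a*a ≤ a*c := mul_le_mul_of_nonneg_left (by linarith) ha0.le
      have hbbc : b*b ≤ b*c := mul_le_mul_of_nonneg_left hbc hb0.le
      have hQ : 4*q^2 ≤ a*c := by
        linarith [mul_nonneg (by linarith : (0:ℤ) ≤ a - 2*q) (by linarith : (0:ℤ) ≤ a + 2*q)]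
      have hR : 4*r^2 ≤ b*c := by
        linarith [mul_nonneg (by linarith : (0:ℤ) ≤ b - 2*r) (by linarith : (0:ℤ) ≤ b + 2*r)]
      have hprod : (3*(a*c))*(3*(b*c)) ≤ (4*(a*c - q^2))*(4*(b*c - r^2)) := by
        apply mul_le_mul (by linarith) (by linarith)
          (by have := mul_pos hb0 hc0; linarith) (by have := mul_pos ha0 hc0; linarith)
      have h16 : 16*((a*c - q^2)*(b*c - r^2)) = 16*c + 16*(c*p - q*r)^2 := by
        linear_combination 16*hid
      have hmain : 9*(a*c)*(b*c) - 9*(a*c)^2 ≤ 16*c := by linarith [hprod, h16, hXsq]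
      have hstep : 9*a*c^2 ≤ 9*(a*c)*(b*c) - 9*(a*c)^2 := by
        have := mul_le_mul_of_nonneg_left hba (show (0:ℤ) ≤ 9*(a*c^2) by positivity)
        linarith
      have hcc : 3*c ≤ c*c := by
        have := mul_le_mul_of_nonneg_left hc3 hc0.le
        linarith
      have haxx : 2*(c*c) ≤ a*(c*c) := by
        have := mul_le_mul_of_nonneg_left ha2 (show (0:ℤ) ≤ c*c by positivity)
        linarith
      linarith [hmain, hstep, hcc, haxx]
    subst b
    -- step 2 : c = a
    have hc' : c = a := by
      by_contra hca
      have hca : a + 1 ≤ c := by omega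
      have hid : (a*a - p^2)*(a*c - q^2) - (a*r - p*q)^2 = a := by linear_combination a*hD
      have hpq1 : 4*(p*q) ≤ a*a := by
        linarith [mul_nonneg (by linarith : (0:ℤ) ≤ a - 2*p) (by linarith : (0:ℤ) ≤ a + 2*q),
          mul_nonneg (by linarith : (0:ℤ) ≤ a + 2*p) (by linarith : (0:ℤ) ≤ a - 2*q)]
      have hpq2 : -(a*a) ≤ 4*(p*q) := by
        linarith [mul_nonneg (by linarith : (0:ℤ) ≤ a - 2*p) (by linarith : (0:ℤ) ≤ a - 2*q),
          mul_nonneg (by linarith : (0:ℤ) ≤ a + 2*p) (by linarith : (0:ℤ) ≤ a + 2*q)]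
      have har1 : 4*(a*r) ≤ 2*(a*a) := by
        linarith [mul_nonneg ha0.le (by linarith : (0:ℤ) ≤ a - 2*r)]
      have har2 : -(2*(a*a)) ≤ 4*(a*r) := by
        linarith [mul_nonneg ha0.le (by linarith : (0:ℤ) ≤ a + 2*r)]
      have hX1 : 4*(a*r - p*q) ≤ 3*(a*a) := by linarith
      have hX2 : -(3*(a*a)) ≤ 4*(a*r - p*q) := by linarith
      have hXsq : 16*(a*r - p*q)^2 ≤ 9*(a*a)^2 := by
        linarith [mul_nonneg (by linarith : (0:ℤ) ≤ 3*(a*a) - 4*(a*r - p*q))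
          (by linarith : (0:ℤ) ≤ 3*(a*a) + 4*(a*r - p*q))]
      have hP : 4*p^2 ≤ a*a := by
        linarith [mul_nonneg (by linarith : (0:ℤ) ≤ a - 2*p) (by linarith : (0:ℤ) ≤ a + 2*p)]
      have haac : a*a ≤ a*c := mul_le_mul_of_nonneg_left (by linarith) ha0.le
      have hQ : 4*q^2 ≤ a*c := by
        linarith [mul_nonneg (by linarith : (0:ℤ) ≤ a - 2*q) (by linarith : (0:ℤ) ≤ a + 2*q)]
      have hprod : (3*(a*a))*(3*(a*c)) ≤ (4*(a*a - p^2))*(4*(a*c - q^2)) := by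
        apply mul_le_mul (by linarith) (by linarith)
          (by have := mul_pos ha0 hc0; linarith) (by have := mul_pos ha0 ha0; linarith)
      have h16 : 16*((a*a - p^2)*(a*c - q^2)) = 16*a + 16*(a*r - p*q)^2 := by
        linear_combination 16*hid
      have hmain : 9*(a*a)*(a*c) - 9*(a*a)^2 ≤ 16*a := by linarith [hprod, h16, hXsq]
      have hstep : 9*a^3 ≤ 9*(a*a)*(a*c) - 9*(a*a)^2 := by
        have := mul_le_mul_of_nonneg_left hca (show (0:ℤ) ≤ 9*(a^3) by positivity)
        linarith
      have haa : 2*a ≤ a*a := by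
        have := mul_le_mul_of_nonneg_left ha2 ha0.le
        linarith
      have haaa : 2*(a*a) ≤ a^3 := by
        have := mul_le_mul_of_nonneg_left ha2 (show (0:ℤ) ≤ a*a by positivity)
        linarith [this]
      linarith [hmain, hstep, haa, haaa]
    subst c
    -- now a = b = c, a ≥ 2
    rcases Int.even_or_odd a with ⟨t, ht⟩ | ⟨s, hs⟩
    · have h2 : (1:ℤ) = 2*(t*(a^2 - p^2 - q^2 - r^2) + p*q*r) := by
        linear_combination -hD + (a^2 - p^2 - q^2 - r^2)*ht
      have : (2:ℤ) ∣ 1 := ⟨_, h2⟩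
      norm_num at this
    · have hs1 : 1 ≤ s := by omega
      have hpb : -s ≤ p ∧ p ≤ s := by omega
      have hqb : -s ≤ q ∧ q ≤ s := by omega
      have hrb : -s ≤ r ∧ r ≤ s := by omega
      have hid : (a*a - p^2)*(a*a - q^2) - (a*r - p*q)^2 = a := by linear_combination a*hD
      have hP : p^2 ≤ s^2 := by
        linarith [mul_nonneg (by linarith [hpb.1] : (0:ℤ) ≤ s + p) (by linarith [hpb.2] : (0:ℤ) ≤ s - p)]
      have hQ : q^2 ≤ s^2 := by
        linarith [mul_nonneg (by linarith [hqb.1] : (0:ℤ) ≤ s + q) (by linarith [hqb.2] : (0:ℤ) ≤ s - q)]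
      have har1 : a*r ≤ a*s := mul_le_mul_of_nonneg_left hrb.2 (by linarith)
      have har2 : -(a*s) ≤ a*r := by
        have := mul_le_mul_of_nonneg_left hrb.1 (show (0:ℤ) ≤ a by linarith)
        linarith
      have hpq1 : p*q ≤ s^2 := by
        linarith [mul_nonneg (by linarith [hpb.1] : (0:ℤ) ≤ s + p) (by linarith [hqb.2] : (0:ℤ) ≤ s - q),
          mul_nonneg (by linarith [hpb.2] : (0:ℤ) ≤ s - p) (by linarith [hqb.1] : (0:ℤ) ≤ s + q)]
      have hpq2 : -(s^2) ≤ p*q := by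
        linarith [mul_nonneg (by linarith [hpb.1] : (0:ℤ) ≤ s + p) (by linarith [hqb.1] : (0:ℤ) ≤ s + q),
          mul_nonneg (by linarith [hpb.2] : (0:ℤ) ≤ s - p) (by linarith [hqb.2] : (0:ℤ) ≤ s - q)]
      have hXsq : (a*r - p*q)^2 ≤ (a*s + s^2)^2 := by
        linarith [mul_nonneg (by linarith : (0:ℤ) ≤ (a*s + s^2) - (a*r - p*q))
          (by linarith : (0:ℤ) ≤ (a*s + s^2) + (a*r - p*q))]
      have hss : s^2 < a*a := by nlinarith
      have hprod : (a*a - s^2)*(a*a - s^2) ≤ (a*a - p^2)*(a*a - q^2) := by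
        apply mul_le_mul (by linarith) (by linarith) (by linarith) (by linarith)
      have hid2 : (a*a - p^2)*(a*a - q^2) = a + (a*r - p*q)^2 := by linear_combination hid
      have hmain : (a*a - s^2)^2 - (a*s + s^2)^2 ≤ a := by
        have hps : (a*a - s^2)^2 = (a*a - s^2)*(a*a - s^2) := by ring
        linarith [hprod, hid2, hXsq]
      have hkey : (a*a - s^2)^2 - (a*s + s^2)^2 = a*(a+s)^2 := by
        have haeq : a = 2*s + 1 := by omega
        subst haeq; ring
      rw [hkey] at hmain
      have h4 : 9 ≤ (a+s)^2 := by nlinarith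
      have := mul_le_mul_of_nonneg_left h4 (show (0:ℤ) ≤ a by linarith)
      linarith

lemma sumsq_le_of_enorm3_le (u w : Fin 3 → ℤ) (h : enorm3 u ≤ enorm3 w) :
    (u 0)^2 + (u 1)^2 + (u 2)^2 ≤ (w 0)^2 + (w 1)^2 + (w 2)^2 := by
  have h2 : (∑ i, ((u i : ℝ))^2) ≤ ∑ i, ((w i : ℝ))^2 := by
    by_contra hc
    push_neg at hc
    have := Real.sqrt_lt_sqrt (by positivity) hc
    exact absurd h (not_le.2 this)
  rw [Fin.sum_univ_three, Fin.sum_univ_three] at h2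
  exact_mod_cast h2

lemma unit3 (v : Fin 3 → ℤ) (h : (v 0)^2 + (v 1)^2 + (v 2)^2 = 1) :
    ∃ k : Fin 3, v = Pi.single k 1 ∨ v = -Pi.single k 1 := by
  obtain ⟨x, y, z, hv⟩ : ∃ x y z, v = ![x, y, z] :=
    ⟨v 0, v 1, v 2, by funext j; fin_cases j <;> simp⟩
  subst hv
  simp only [Matrix.cons_val_zero, Matrix.cons_val_one, Matrix.head_cons,
    Matrix.cons_val_two, Matrix.tail_cons] at h
  have h0 : -1 ≤ x ∧ x ≤ 1 := by constructor <;> nlinarith [sq_nonneg y, sq_nonneg z]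
  have h1 : -1 ≤ y ∧ y ≤ 1 := by constructor <;> nlinarith [sq_nonneg x, sq_nonneg z]
  have h2 : -1 ≤ z ∧ z ≤ 1 := by constructor <;> nlinarith [sq_nonneg x, sq_nonneg y]
  obtain ⟨h0a, h0b⟩ := h0; obtain ⟨h1a, h1b⟩ := h1; obtain ⟨h2a, h2b⟩ := h2
  interval_cases x <;> interval_cases y <;> interval_cases z <;>
  first
    | (exfalso; norm_num at h; done)
    | (refine ⟨0, Or.inl ?_⟩; funext j; fin_cases j <;> simp [Pi.single_apply, Pi.neg_apply]; done)
    | (refine ⟨0, Or.inr ?_⟩; funext j; fin_cases j <;> simp [Pi.single_apply, Pi.neg_apply]; done)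
    | (refine ⟨1, Or.inl ?_⟩; funext j; fin_cases j <;> simp [Pi.single_apply, Pi.neg_apply]; done)
    | (refine ⟨1, Or.inr ?_⟩; funext j; fin_cases j <;> simp [Pi.single_apply, Pi.neg_apply]; done)
    | (refine ⟨2, Or.inl ?_⟩; funext j; fin_cases j <;> simp [Pi.single_apply, Pi.neg_apply]; done)
    | (refine ⟨2, Or.inr ?_⟩; funext j; fin_cases j <;> simp [Pi.single_apply, Pi.neg_apply]; done)

lemma keyIntSym (a b c p q r : ℤ) (ha : 1 ≤ a) (hb : 1 ≤ b) (hc : 1 ≤ c)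
    (hp1 : 2*p ≤ a) (hp1' : 2*p ≤ b) (hp2 : -a ≤ 2*p) (hp2' : -b ≤ 2*p)
    (hq1 : 2*q ≤ a) (hq1' : 2*q ≤ c) (hq2 : -a ≤ 2*q) (hq2' : -c ≤ 2*q)
    (hr1 : 2*r ≤ b) (hr1' : 2*r ≤ c) (hr2 : -b ≤ 2*r) (hr2' : -c ≤ 2*r)
    (hD : a*b*c + 2*p*q*r - a*r^2 - b*q^2 - c*p^2 = 1) :
    a = 1 ∧ b = 1 ∧ c = 1 := by
  rcases le_total a b with h1 | h1
  · rcases le_total b c with h2 | h2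
    · exact keyInt a b c p q r ha h1 h2 hp1 hp2 hq1 hq2 hr1 hr2 hD
    · rcases le_total a c with h3 | h3
      · obtain ⟨e1, e2, e3⟩ := keyInt a c b q p r ha h3 h2 hq1 hq2 hp1 hp2 hr1' hr2'
          (by linear_combination hD)
        exact ⟨e1, e3, e2⟩
      · obtain ⟨e1, e2, e3⟩ := keyInt c a b q r p hc h3 h1 hq1' hq2' hr1' hr2' hp1 hp2
          (by linear_combination hD)
        exact ⟨e2, e3, e1⟩
  · rcases le_total b c with h2 | h2
    · rcases le_total a c with h3 | h3
      · obtain ⟨e1, e2, e3⟩ := keyInt b a c p r q hb h1 h3 hp1' hp2' hr1 hr2 hq1 hq2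
          (by linear_combination hD)
        exact ⟨e2, e1, e3⟩
      · obtain ⟨e1, e2, e3⟩ := keyInt b c a r p q hb h2 h3 hr1 hr2 hp1' hp2' hq1' hq2'
          (by linear_combination hD)
        exact ⟨e3, e1, e2⟩
    · obtain ⟨e1, e2, e3⟩ := keyInt c b a r q p hc h2 h1 hr1' hr2' hq1' hq2' hp1' hp2'
        (by linear_combination hD)
      exact ⟨e3, e2, e1⟩

lemma pair_ineq (u w : Fin 3 → ℤ)
    (hplus : enorm3 (u + w) ≥ max (enorm3 u) (enorm3 w))
    (hminus : enorm3 (u - w) ≥ max (enorm3 u) (enorm3 w)) :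
    2*(u 0 * w 0 + u 1 * w 1 + u 2 * w 2) ≤ (u 0)^2 + (u 1)^2 + (u 2)^2 ∧
    2*(u 0 * w 0 + u 1 * w 1 + u 2 * w 2) ≤ (w 0)^2 + (w 1)^2 + (w 2)^2 ∧
    -((u 0)^2 + (u 1)^2 + (u 2)^2) ≤ 2*(u 0 * w 0 + u 1 * w 1 + u 2 * w 2) ∧
    -((w 0)^2 + (w 1)^2 + (w 2)^2) ≤ 2*(u 0 * w 0 + u 1 * w 1 + u 2 * w 2) := by
  have hp1 := sumsq_le_of_enorm3_le u (u + w) (le_trans (le_max_left _ _) hplus)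
  have hp2 := sumsq_le_of_enorm3_le w (u + w) (le_trans (le_max_right _ _) hplus)
  have hm1 := sumsq_le_of_enorm3_le u (u - w) (le_trans (le_max_left _ _) hminus)
  have hm2 := sumsq_le_of_enorm3_le w (u - w) (le_trans (le_max_right _ _) hminus)
  simp only [Pi.add_apply, Pi.sub_apply] at hp1 hp2 hm1 hm2
  exact ⟨by linarith [hm2], by linarith [hm1], by linarith [hp2], by linarith [hp1]⟩


set_option maxHeartbeats 1000000 in
/-- Norm-inequality form of the Main Theorem: if `{v₁, v₂, v₃}` is a `ℤ`-basis of `ℤ³`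
with `‖vᵢ ± vⱼ‖ ≥ max ‖vᵢ‖ ‖vⱼ‖` for all `i ≠ j`, then each `vᵢ ∈ {±e₁, ±e₂, ±e₃}`. -/
theorem mainTheoremNormForm (v₁ v₂ v₃ : Fin 3 → ℤ) (hb : IsZBasis v₁ v₂ v₃)
    (h : ∀ i j : Fin 3, i ≠ j →
      enorm3 (![v₁, v₂, v₃] i + ![v₁, v₂, v₃] j)
          ≥ max (enorm3 (![v₁, v₂, v₃] i)) (enorm3 (![v₁, v₂, v₃] j)) ∧
        enorm3 (![v₁, v₂, v₃] i - ![v₁, v₂, v₃] j)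
          ≥ max (enorm3 (![v₁, v₂, v₃] i)) (enorm3 (![v₁, v₂, v₃] j))) :
    ∀ i : Fin 3, ∃ k : Fin 3,
      ![v₁, v₂, v₃] i = Pi.single k 1 ∨ ![v₁, v₂, v₃] i = -Pi.single k 1 := by
  have h01 := h 0 1 (by decide)
  have h02 := h 0 2 (by decide)
  have h12 := h 1 2 (by decide)
  simp only [Matrix.cons_val_zero, Matrix.cons_val_one, Matrix.head_cons,
    Matrix.cons_val_two, Matrix.tail_cons] at h01 h02 h12
  have H01 := pair_ineq v₁ v₂ h01.1 h01.2
  have H02 := pair_ineq v₁ v₃ h02.1 h02.2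
  have H12 := pair_ineq v₂ v₃ h12.1 h12.2
  obtain ⟨x0, x1, x2, hv1⟩ : ∃ x0 x1 x2, v₁ = ![x0, x1, x2] :=
    ⟨v₁ 0, v₁ 1, v₁ 2, by funext j; fin_cases j <;> simp⟩
  obtain ⟨y0, y1, y2, hv2⟩ : ∃ y0 y1 y2, v₂ = ![y0, y1, y2] :=
    ⟨v₂ 0, v₂ 1, v₂ 2, by funext j; fin_cases j <;> simp⟩
  obtain ⟨z0, z1, z2, hv3⟩ : ∃ z0 z1 z2, v₃ = ![z0, z1, z2] :=
    ⟨v₃ 0, v₃ 1, v₃ 2, by funext j; fin_cases j <;> simp⟩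
  subst hv1; subst hv2; subst hv3
  simp only [Matrix.cons_val_zero, Matrix.cons_val_one, Matrix.head_cons,
    Matrix.cons_val_two, Matrix.tail_cons] at H01 H02 H12
  obtain ⟨hp1, hp1', hp2, hp2'⟩ := H01
  obtain ⟨hq1, hq1', hq2, hq2'⟩ := H02
  obtain ⟨hr1, hr1', hr2, hr2'⟩ := H12
  -- determinant
  have hdet : (Matrix.of fun i j =>
      (![![x0,x1,x2], ![y0,y1,y2], ![z0,z1,z2]] : Fin 3 → Fin 3 → ℤ) j i).det
      = x0*(y1*z2 - y2*z1) - y0*(x1*z2 - x2*z1) + z0*(x1*y2 - x2*y1) := by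
    rw [Matrix.det_fin_three]
    simp only [Matrix.of_apply, Matrix.cons_val_zero, Matrix.cons_val_one, Matrix.head_cons,
      Matrix.cons_val_two, Matrix.tail_cons]
    ring
  have hG : (x0^2+x1^2+x2^2)*(y0^2+y1^2+y2^2)*(z0^2+z1^2+z2^2)
      + 2*(x0*y0+x1*y1+x2*y2)*(x0*z0+x1*z1+x2*z2)*(y0*z0+y1*z1+y2*z2)
      - (x0^2+x1^2+x2^2)*(y0*z0+y1*z1+y2*z2)^2
      - (y0^2+y1^2+y2^2)*(x0*z0+x1*z1+x2*z2)^2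
      - (z0^2+z1^2+z2^2)*(x0*y0+x1*y1+x2*y2)^2 = 1 := by
    rcases hb with hd | hd <;> rw [hdet] at hd
    · linear_combination (x0*(y1*z2 - y2*z1) - y0*(x1*z2 - x2*z1) + z0*(x1*y2 - x2*y1) + 1) * hd
    · linear_combination (x0*(y1*z2 - y2*z1) - y0*(x1*z2 - x2*z1) + z0*(x1*y2 - x2*y1) - 1) * hd
  have hA : 1 ≤ x0^2+x1^2+x2^2 := by
    by_contra hA'
    push_neg at hA'
    have hs : x0^2+x1^2+x2^2 ≤ 0 := by linarith
    have e0 : x0 = 0 := by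
      have := le_antisymm (by linarith [sq_nonneg x1, sq_nonneg x2] : x0^2 ≤ 0) (sq_nonneg x0)
      exact sq_eq_zero_iff.mp this
    have e1 : x1 = 0 := by
      have := le_antisymm (by linarith [sq_nonneg x0, sq_nonneg x2] : x1^2 ≤ 0) (sq_nonneg x1)
      exact sq_eq_zero_iff.mp this
    have e2 : x2 = 0 := by
      have := le_antisymm (by linarith [sq_nonneg x0, sq_nonneg x1] : x2^2 ≤ 0) (sq_nonneg x2)
      exact sq_eq_zero_iff.mp this
    rw [e0, e1, e2] at hG
    exact absurd (by linear_combination hG : (0:ℤ) = 1) (by norm_num)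
  have hB : 1 ≤ y0^2+y1^2+y2^2 := by
    by_contra hA'
    push_neg at hA'
    have hs : y0^2+y1^2+y2^2 ≤ 0 := by linarith
    have e0 : y0 = 0 := by
      have := le_antisymm (by linarith [sq_nonneg y1, sq_nonneg y2] : y0^2 ≤ 0) (sq_nonneg y0)
      exact sq_eq_zero_iff.mp this
    have e1 : y1 = 0 := by
      have := le_antisymm (by linarith [sq_nonneg y0, sq_nonneg y2] : y1^2 ≤ 0) (sq_nonneg y1)
      exact sq_eq_zero_iff.mp this
    have e2 : y2 = 0 := by
      have := le_antisymm (by linarith [sq_nonneg y0, sq_nonneg y1] : y2^2 ≤ 0) (sq_nonneg y2)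
      exact sq_eq_zero_iff.mp this
    rw [e0, e1, e2] at hG
    exact absurd (by linear_combination hG : (0:ℤ) = 1) (by norm_num)
  have hC : 1 ≤ z0^2+z1^2+z2^2 := by
    by_contra hA'
    push_neg at hA'
    have hs : z0^2+z1^2+z2^2 ≤ 0 := by linarith
    have e0 : z0 = 0 := by
      have := le_antisymm (by linarith [sq_nonneg z1, sq_nonneg z2] : z0^2 ≤ 0) (sq_nonneg z0)
      exact sq_eq_zero_iff.mp this
    have e1 : z1 = 0 := by
      have := le_antisymm (by linarith [sq_nonneg z0, sq_nonneg z2] : z1^2 ≤ 0) (sq_nonneg z1)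
      exact sq_eq_zero_iff.mp this
    have e2 : z2 = 0 := by
      have := le_antisymm (by linarith [sq_nonneg z0, sq_nonneg z1] : z2^2 ≤ 0) (sq_nonneg z2)
      exact sq_eq_zero_iff.mp this
    rw [e0, e1, e2] at hG
    exact absurd (by linear_combination hG : (0:ℤ) = 1) (by norm_num)
  obtain ⟨e1, e2, e3⟩ := keyIntSym (x0^2+x1^2+x2^2) (y0^2+y1^2+y2^2) (z0^2+z1^2+z2^2)
    (x0*y0+x1*y1+x2*y2) (x0*z0+x1*z1+x2*z2) (y0*z0+y1*z1+y2*z2)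
    hA hB hC hp1 hp1' hp2 hp2' hq1 hq1' hq2 hq2' hr1 hr1' hr2 hr2' hG
  intro i
  fin_cases i
  · exact unit3 _ (by simpa using e1)
  · exact unit3 _ (by simpa using e2)
  · exact unit3 _ (by simpa using e3)
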